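/- Let B, β, v, w, ρ, γ be real numbers, μ > 0, N₀ > 0 with v + μ ≠ 0. The characteristic polynomial of the 5×5 real matrix J_DFE equals (X + (v+μ))·(X + (ρ+γ+μ))·(X + μ)²·(X − (Bβ/(N₀(v+μ)) − (w+μ))); in particular, its roots are −(v+μ), −(ρ+γ+μ), −μ (with multiplicity 2), and Bβ/(N₀(v+μ)) − (w+μ). -/

import Mathlib

open Polynomial

set_option maxHeartbeats 1000000 in
theorem charpoly_jacobian_DFE_aux (B β v w ρ γ μ N₀ : ℝ) :
    (!![-(v + μ), -(B * β / (N₀ * (v + μ))), 0, 0, 0;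
         0, B * β / (N₀ * (v + μ)) - (w + μ), 0, 0, 0;
         0, w, -(ρ + γ + μ), 0, 0;
         v, 0, 0, -μ, 0;
         0, 0, γ, 0, -μ] : Matrix (Fin 5) (Fin 5) ℝ).charpoly =
      (X + C (v + μ)) * (X + C (ρ + γ + μ)) * (X + C μ) ^ 2 *
        (X - C (B * β / (N₀ * (v + μ)) - (w + μ))) := by
  have h : Matrix.charmatrix
      (!![-(v + μ), -(B * β / (N₀ * (v + μ))), 0, 0, 0;
         0, B * β / (N₀ * (v + μ)) - (w + μ), 0, 0, 0;
         0, w, -(ρ + γ + μ), 0, 0;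
         v, 0, 0, -μ, 0;
         0, 0, γ, 0, -μ] : Matrix (Fin 5) (Fin 5) ℝ) =
      !![X + C (v + μ), C (B * β / (N₀ * (v + μ))), 0, 0, 0;
         0, X - C (B * β / (N₀ * (v + μ)) - (w + μ)), 0, 0, 0;
         0, -C w, X + C (ρ + γ + μ), 0, 0;
         -C v, 0, 0, X + C μ, 0;
         0, 0, -C γ, 0, X + C μ] := by
    refine Matrix.ext fun i j => ?_
    fin_cases i <;> fin_cases j <;>
      simp [Matrix.charmatrix_apply_eq, Matrix.charmatrix_apply_ne, map_neg, sub_neg_eq_add,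
        Matrix.vecHead, Matrix.vecTail] <;> ring
  rw [Matrix.charpoly, h]
  simp [Matrix.det_succ_row_zero, Fin.sum_univ_succ, Fin.succAbove]
  ring

/-- The characteristic polynomial of the Jacobian of the reduced SAIVRD system at the
disease-free equilibrium factors as
`(X + (v+μ))(X + (ρ+γ+μ))(X + μ)²(X − (Bβ/(N₀(v+μ)) − (w+μ)))`;
in particular its roots are `−(v+μ), −(ρ+γ+μ), −μ` (twice) and `Bβ/(N₀(v+μ)) − (w+μ)`. -/
theorem charpoly_jacobian_DFE
    (B β v w ρ γ μ N₀ : ℝ) (hμ : 0 < μ) (hN₀ : 0 < N₀) (hvμ : v + μ ≠ 0) :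
    let J : Matrix (Fin 5) (Fin 5) ℝ :=
      !![-(v + μ), -(B * β / (N₀ * (v + μ))), 0, 0, 0;
         0, B * β / (N₀ * (v + μ)) - (w + μ), 0, 0, 0;
         0, w, -(ρ + γ + μ), 0, 0;
         v, 0, 0, -μ, 0;
         0, 0, γ, 0, -μ]
    J.charpoly =
      (X + C (v + μ)) * (X + C (ρ + γ + μ)) * (X + C μ) ^ 2 *
        (X - C (B * β / (N₀ * (v + μ)) - (w + μ))) ∧
    J.charpoly.roots =
      {-(v + μ), -(ρ + γ + μ), -μ, -μ, B * β / (N₀ * (v + μ)) - (w + μ)} := by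
  intro J
  have h := charpoly_jacobian_DFE_aux B β v w ρ γ μ N₀
  refine ⟨h, ?_⟩
  rw [h]
  have h1 : (X + C (v + μ) : ℝ[X]) ≠ 0 := (monic_X_add_C _).ne_zero
  have h2 : (X + C (ρ + γ + μ) : ℝ[X]) ≠ 0 := (monic_X_add_C _).ne_zero
  have h3 : ((X + C μ : ℝ[X]) ^ 2) ≠ 0 := ((monic_X_add_C _).pow 2).ne_zero
  have h4 : (X - C (B * β / (N₀ * (v + μ)) - (w + μ)) : ℝ[X]) ≠ 0 := (monic_X_sub_C _).ne_zero
  have hadd : ∀ a : ℝ, (X + C a).roots = {-a} := fun a => by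
    rw [← sub_neg_eq_add, ← map_neg C]; exact roots_X_sub_C _
  rw [roots_mul (mul_ne_zero (mul_ne_zero (mul_ne_zero h1 h2) h3) h4),
    roots_mul (mul_ne_zero (mul_ne_zero h1 h2) h3),
    roots_mul (mul_ne_zero h1 h2), roots_pow, roots_X_sub_C, hadd, hadd, hadd]
  simp only [two_smul]
  rfl
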